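/- arXiv:1304.0371 — 2 statements merged into one kernel-verified Lean document; each statement's English description precedes it below -/
import Mathlib

section
/- Let n ≥ 1 and let f : (ZMod 2)^n → ℝ be a Boolean function (f(x) ∈ {−1,1} for all x) with spectral norm ‖f̂‖₁ = A. Then there exists a nonempty affine subspace V ⊆ (ZMod 2)^n of codimension at most A² (i.e., the direction of V is a linear subspace of dimension at least n − A²) such that f is constant on V. -/
noncomputable def chi {n : ℕ} (α x : Fin n → ZMod 2) : ℝ :=
  if (∑ i, α i * x i : ZMod 2) = 0 then 1 else -1

noncomputable def fhat {n : ℕ} (f : (Fin n → ZMod 2) → ℝ) (α : Fin n → ZMod 2) : ℝ :=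
  (2 ^ n : ℝ)⁻¹ * ∑ x : Fin n → ZMod 2, f x * chi α x

/-- sign helper -/
noncomputable def sgn (c : ZMod 2) : ℝ := if c = 0 then 1 else -1

lemma sgn_add (a b : ZMod 2) : sgn (a + b) = sgn a * sgn b := by
  have h : ∀ c : ZMod 2, c = 0 ∨ c = 1 := by decide
  rcases h a with ha | ha <;> rcases h b with hb | hb <;>
    subst ha <;> subst hb <;> norm_num [sgn] <;> decide

noncomputable def ip {n : ℕ} (α x : Fin n → ZMod 2) : ZMod 2 := ∑ i, α i * x i

lemma chi_eq_sgn {n : ℕ} (α x : Fin n → ZMod 2) : chi α x = sgn (ip α x) := rfl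

lemma ip_comm {n : ℕ} (α x : Fin n → ZMod 2) : ip α x = ip x α := by
  simp [ip, mul_comm]

lemma ip_add_left {n : ℕ} (α β x : Fin n → ZMod 2) :
    ip (α + β) x = ip α x + ip β x := by
  simp [ip, add_mul, Finset.sum_add_distrib]

lemma ip_add_right {n : ℕ} (α x y : Fin n → ZMod 2) :
    ip α (x + y) = ip α x + ip α y := by
  simp [ip, mul_add, Finset.sum_add_distrib]

lemma chi_add_left {n : ℕ} (α β x : Fin n → ZMod 2) :
    chi (α + β) x = chi α x * chi β x := by
  rw [chi_eq_sgn, chi_eq_sgn, chi_eq_sgn, ip_add_left, sgn_add]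

lemma chi_add_right {n : ℕ} (α x y : Fin n → ZMod 2) :
    chi α (x + y) = chi α x * chi α y := by
  rw [chi_eq_sgn, chi_eq_sgn, chi_eq_sgn, ip_add_right, sgn_add]

lemma add_eq_zero_iff_eq {n : ℕ} (x y : Fin n → ZMod 2) : x + y = 0 ↔ x = y := by
  have h : ∀ a b : ZMod 2, a + b = 0 ↔ a = b := by decide
  constructor
  · intro hxy; funext j
    have := congrFun hxy j
    exact (h _ _).1 this
  · rintro rfl; funext j; exact (h _ _).2 rfl

lemma card_cube (n : ℕ) : Fintype.card (Fin n → ZMod 2) = 2 ^ n := by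
  simp

lemma sum_chi {n : ℕ} (α : Fin n → ZMod 2) :
    ∑ x : Fin n → ZMod 2, chi α x = if α = 0 then (2 ^ n : ℝ) else 0 := by
  by_cases hα : α = 0
  · subst hα
    have h1 : ∀ x : Fin n → ZMod 2, chi 0 x = 1 := by
      intro x; simp [chi]
    rw [Finset.sum_congr rfl (fun x _ => h1 x), Finset.sum_const, Finset.card_univ,
      card_cube, nsmul_eq_mul, mul_one]
    norm_num
  · simp only [hα, if_false]
    obtain ⟨i, hi⟩ : ∃ i, α i ≠ 0 := by
      by_contra h; push_neg at h; exact hα (funext h)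
    have hi1 : α i = 1 := by
      have h : ∀ a : ZMod 2, a ≠ 0 → a = 1 := by decide
      exact h _ hi
    set t : Fin n → ZMod 2 := Pi.single i 1 with ht
    have hchit : chi α t = -1 := by
      rw [chi_eq_sgn]
      have : ip α t = 1 := by
        rw [ip, Finset.sum_eq_single i]
        · simp [ht, hi1]
        · intro j _ hj; simp [ht, Pi.single_eq_of_ne hj]
        · simp
      rw [this]; simp [sgn]
    have key : ∑ x : Fin n → ZMod 2, chi α x
        = ∑ x : Fin n → ZMod 2, chi α (x + t) := by
      exact (Fintype.sum_equiv (Equiv.addRight t) _ _ (fun x => rfl)).symm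
    have key2 : ∑ x : Fin n → ZMod 2, chi α (x + t)
        = -∑ x : Fin n → ZMod 2, chi α x := by
      simp only [chi_add_right, hchit, mul_neg_one]
      rw [Finset.sum_neg_distrib]
    linarith [key, key2 ▸ key]

lemma sum_chi_fst {n : ℕ} (x : Fin n → ZMod 2) :
    ∑ γ : Fin n → ZMod 2, chi γ x = if x = 0 then (2 ^ n : ℝ) else 0 := by
  have : ∀ γ : Fin n → ZMod 2, chi γ x = chi x γ := by
    intro γ; rw [chi_eq_sgn, chi_eq_sgn, ip_comm]
  rw [Finset.sum_congr rfl (fun γ _ => this γ), sum_chi]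

lemma orth {n : ℕ} (x y : Fin n → ZMod 2) :
    ∑ γ : Fin n → ZMod 2, chi γ x * chi γ y = if x = y then (2 ^ n : ℝ) else 0 := by
  have : ∀ γ : Fin n → ZMod 2, chi γ x * chi γ y = chi γ (x + y) := by
    intro γ; rw [chi_add_right]
  rw [Finset.sum_congr rfl (fun γ _ => this γ)]
  rw [show ∑ γ : Fin n → ZMod 2, chi γ (x+y) = if x + y = 0 then (2^n:ℝ) else 0 from ?_]
  · congr 1
    simp [add_eq_zero_iff_eq]
  · have : ∀ γ : Fin n → ZMod 2, chi γ (x+y) = chi (x+y) γ := by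
      intro γ; rw [chi_eq_sgn, chi_eq_sgn, ip_comm]
    rw [Finset.sum_congr rfl (fun γ _ => this γ), sum_chi]

lemma two_pow_pos (n : ℕ) : (0:ℝ) < 2 ^ n := by positivity

lemma fourier_inversion {n : ℕ} (f : (Fin n → ZMod 2) → ℝ) (x : Fin n → ZMod 2) :
    ∑ γ : Fin n → ZMod 2, fhat f γ * chi γ x = f x := by
  simp only [fhat]
  have h1 : ∀ γ : Fin n → ZMod 2,
      ((2 ^ n : ℝ)⁻¹ * ∑ y : Fin n → ZMod 2, f y * chi γ y) * chi γ x
      = (2 ^ n : ℝ)⁻¹ * ∑ y : Fin n → ZMod 2, f y * (chi γ y * chi γ x) := by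
    intro γ
    rw [mul_assoc, Finset.sum_mul]
    congr 1
    exact Finset.sum_congr rfl (fun y _ => by ring)
  rw [Finset.sum_congr rfl (fun γ _ => h1 γ), ← Finset.mul_sum, Finset.sum_comm]
  have h2 : ∀ y : Fin n → ZMod 2,
      ∑ γ : Fin n → ZMod 2, f y * (chi γ y * chi γ x)
      = f y * if y = x then (2^n:ℝ) else 0 := by
    intro y
    rw [← Finset.mul_sum, orth]
  rw [Finset.sum_congr rfl (fun y _ => h2 y)]
  simp only [mul_ite, mul_zero]
  rw [Finset.sum_ite_eq' Finset.univ x (fun y => f y * (2^n:ℝ))]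
  simp only [Finset.mem_univ, if_true]
  field_simp

lemma parseval {n : ℕ} (f : (Fin n → ZMod 2) → ℝ) (hf : ∀ x, f x = 1 ∨ f x = -1) :
    ∑ γ : Fin n → ZMod 2, (fhat f γ) ^ 2 = 1 := by
  have hsq : ∀ x, f x * f x = 1 := by
    intro x; rcases hf x with h | h <;> rw [h] <;> norm_num
  have h1 : ∀ γ : Fin n → ZMod 2, (fhat f γ) ^ 2
      = fhat f γ * ((2 ^ n : ℝ)⁻¹ * ∑ x : Fin n → ZMod 2, f x * chi γ x) := by
    intro γ; rw [sq]; rfl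
  rw [Finset.sum_congr rfl (fun γ _ => h1 γ)]
  have h2 : ∀ γ : Fin n → ZMod 2,
      fhat f γ * ((2 ^ n : ℝ)⁻¹ * ∑ x : Fin n → ZMod 2, f x * chi γ x)
      = (2 ^ n : ℝ)⁻¹ * ∑ x : Fin n → ZMod 2, f x * (fhat f γ * chi γ x) := by
    intro γ; simp only [Finset.mul_sum]
    exact Finset.sum_congr rfl (fun x _ => by ring)
  rw [Finset.sum_congr rfl (fun γ _ => h2 γ), ← Finset.mul_sum, Finset.sum_comm]
  have h3 : ∀ x : Fin n → ZMod 2,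
      ∑ γ : Fin n → ZMod 2, f x * (fhat f γ * chi γ x) = f x * f x := by
    intro x
    rw [← Finset.mul_sum, fourier_inversion]
  rw [Finset.sum_congr rfl (fun x _ => h3 x)]
  rw [Finset.sum_congr rfl (fun x _ => hsq x), Finset.sum_const, Finset.card_univ, card_cube]
  rw [nsmul_eq_mul, mul_one]
  push_cast
  rw [inv_mul_cancel₀ (by positivity)]

lemma add_add_self {n : ℕ} (x α : Fin n → ZMod 2) : x + α + α = x := by
  funext j
  have : ∀ a b : ZMod 2, a + b + b = a := by decide
  exact this _ _

lemma convolution {n : ℕ} (f : (Fin n → ZMod 2) → ℝ) (hf : ∀ x, f x = 1 ∨ f x = -1)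
    {α : Fin n → ZMod 2} (hα : α ≠ 0) :
    ∑ γ : Fin n → ZMod 2, fhat f γ * fhat f (γ + α) = 0 := by
  have hsq : ∀ x, f x * f x = 1 := by
    intro x; rcases hf x with h | h <;> rw [h] <;> norm_num
  have h1 : ∀ γ : Fin n → ZMod 2, fhat f γ * fhat f (γ + α)
      = (2 ^ n : ℝ)⁻¹ * ∑ x : Fin n → ZMod 2, f x * (fhat f (γ+α) * chi γ x) := by
    intro γ
    rw [show fhat f γ * fhat f (γ + α) = fhat f (γ+α) * fhat f γ from mul_comm _ _]
    nth_rewrite 2 [fhat]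
    simp only [Finset.mul_sum]
    exact Finset.sum_congr rfl (fun x _ => by ring)
  rw [Finset.sum_congr rfl (fun γ _ => h1 γ), ← Finset.mul_sum, Finset.sum_comm]
  have h3 : ∀ x : Fin n → ZMod 2,
      ∑ γ : Fin n → ZMod 2, f x * (fhat f (γ+α) * chi γ x)
      = chi α x := by
    intro x
    rw [← Finset.mul_sum]
    have reidx : ∑ γ : Fin n → ZMod 2, fhat f (γ+α) * chi γ x
        = ∑ δ : Fin n → ZMod 2, fhat f δ * chi (δ + α) x := by
      apply Fintype.sum_equiv (Equiv.addRight α)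
      intro δ
      simp only [Equiv.coe_addRight, add_add_self]
    rw [reidx]
    have h4 : ∀ δ : Fin n → ZMod 2, fhat f δ * chi (δ + α) x
        = chi α x * (fhat f δ * chi δ x) := by
      intro δ; rw [chi_add_left]; ring
    rw [Finset.sum_congr rfl (fun δ _ => h4 δ), ← Finset.mul_sum, fourier_inversion]
    rw [← mul_assoc, mul_comm (f x) (chi α x), mul_assoc, hsq, mul_one]
  rw [Finset.sum_congr rfl (fun x _ => h3 x), sum_chi]
  simp [hα]

lemma zmod2_sum (F : ZMod 2 → ℝ) : ∑ c : ZMod 2, F c = F 0 + F 1 := by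
  have h : (Finset.univ : Finset (ZMod 2)) = {0, 1} := by decide
  rw [h, Finset.sum_insert (by decide), Finset.sum_singleton]

lemma ip_insertNth {m : ℕ} (γ : Fin (m+1) → ZMod 2) (i : Fin (m+1)) (c : ZMod 2)
    (y : Fin m → ZMod 2) :
    ip γ (i.insertNth c y) = γ i * c + ip (i.removeNth γ) y := by
  set z : Fin (m+1) → ZMod 2 := i.insertNth c y with hz
  have h := Fin.sum_univ_succAbove (fun j => γ j * z j) i
  have hzi : z i = c := by rw [hz]; simp
  have hzs : ∀ k : Fin m, z (i.succAbove k) = y k := by intro k; rw [hz]; simp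
  calc ip γ z = ∑ j, γ j * z j := rfl
    _ = γ i * z i + ∑ k : Fin m, γ (i.succAbove k) * z (i.succAbove k) := h
    _ = γ i * c + ip (i.removeNth γ) y := by
        rw [hzi]; congr 1; apply Finset.sum_congr rfl; intro k _
        rw [hzs k]; rfl

lemma insertNth_add {m : ℕ} (i : Fin (m+1)) (c d : ZMod 2) (y z : Fin m → ZMod 2) :
    i.insertNth (c + d) (y + z)
      = (i.insertNth c y : Fin (m+1) → ZMod 2) + i.insertNth d z := by
  funext j
  by_cases hj : j = i
  · subst hj; simp
  · obtain ⟨k, rfl⟩ := Fin.exists_succAbove_eq hj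
    simp

lemma ip_smul {m : ℕ} (c : ZMod 2) (α y : Fin m → ZMod 2) :
    ip (c • α) y = c * ip α y := by
  simp [ip, Finset.mul_sum, mul_assoc]

lemma insertNth_zero_add {m : ℕ} (i : Fin (m+1)) (α : Fin (m+1) → ZMod 2) (hαi : α i = 1)
    (β : Fin m → ZMod 2) :
    (i.insertNth 0 β : Fin (m+1) → ZMod 2) + α = i.insertNth 1 (i.removeNth α + β) := by
  set α' := i.removeNth α with hα'
  have hα2 : i.insertNth (α i) α' = α := Fin.insertNth_self_removeNth i α
  rw [← hα2, hαi, ← insertNth_add, zero_add]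
  exact congrArg (fun w => i.insertNth 1 w) (add_comm β α')

lemma fhat_restrict {m : ℕ} (f : (Fin (m+1) → ZMod 2) → ℝ) (i : Fin (m+1))
    (α : Fin (m+1) → ZMod 2) (hαi : α i = 1) (b : ZMod 2) (β : Fin m → ZMod 2) :
    fhat (fun y => f (i.insertNth (b + ip (i.removeNth α) y) y)) β
      = fhat f (i.insertNth 0 β) + sgn b * fhat f (i.insertNth 0 β + α) := by
  set α' := i.removeNth α with hα'
  have key : ∀ y : Fin m → ZMod 2, f (i.insertNth (b + ip α' y) y)
      = ∑ γ : Fin (m+1) → ZMod 2,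
          fhat f γ * (sgn (γ i * b) * chi (γ i • α' + i.removeNth γ) y) := by
    intro y
    rw [← fourier_inversion f (i.insertNth (b + ip α' y) y)]
    apply Finset.sum_congr rfl
    intro γ _
    congr 1
    rw [chi_eq_sgn, ip_insertNth, chi_eq_sgn]
    rw [mul_add, ← sgn_add]
    congr 1
    rw [ip_add_left, ip_smul]
    ring
  rw [fhat]
  have swap : ∑ y : Fin m → ZMod 2,
      f (i.insertNth (b + ip α' y) y) * chi β y
      = ∑ γ : Fin (m+1) → ZMod 2, fhat f γ * (sgn (γ i * b) *
          (if γ i • α' + i.removeNth γ = β then (2^m : ℝ) else 0)) := by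
    have e1 : ∀ y : Fin m → ZMod 2, f (i.insertNth (b + ip α' y) y) * chi β y
        = ∑ γ : Fin (m+1) → ZMod 2,
            fhat f γ * (sgn (γ i * b) * (chi (γ i • α' + i.removeNth γ) y * chi β y)) := by
      intro y
      rw [key y, Finset.sum_mul]
      exact Finset.sum_congr rfl (fun γ _ => by ring)
    rw [Finset.sum_congr rfl (fun y _ => e1 y), Finset.sum_comm]
    apply Finset.sum_congr rfl
    intro γ _
    rw [← Finset.mul_sum, ← Finset.mul_sum]
    congr 2
    have e2 : ∀ y : Fin m → ZMod 2, chi (γ i • α' + i.removeNth γ) y * chi β y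
        = chi (γ i • α' + i.removeNth γ + β) y := by
      intro y; simp only [chi_add_left]
    rw [Finset.sum_congr rfl (fun y _ => e2 y), sum_chi]
    congr 1
    simp [add_eq_zero_iff_eq]
  rw [swap]
  have step : ∑ γ : Fin (m+1) → ZMod 2, fhat f γ * (sgn (γ i * b) *
        (if γ i • α' + i.removeNth γ = β then (2^m : ℝ) else 0))
      = ∑ p : ZMod 2 × (Fin m → ZMod 2), fhat f (i.insertNth p.1 p.2) * (sgn (p.1 * b) *
        (if p.1 • α' + p.2 = β then (2^m : ℝ) else 0)) := by
    apply Fintype.sum_equiv (Fin.insertNthEquiv (fun _ : Fin (m+1) => ZMod 2) i).symm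
    intro γ
    simp [Fin.insertNthEquiv, Fin.insertNth_self_removeNth]
    by_cases hc : γ i • α' + i.removeNth γ = β <;> simp [hc]
  rw [step, Fintype.sum_prod_type,
    zmod2_sum (fun c => ∑ δ : Fin m → ZMod 2, fhat f (i.insertNth c δ) * (sgn (c * b) *
      (if c • α' + δ = β then (2^m : ℝ) else 0)))]
  have h0 : ∑ δ : Fin m → ZMod 2, fhat f (i.insertNth 0 δ) * (sgn ((0:ZMod 2) * b) *
        (if (0:ZMod 2) • α' + δ = β then (2^m : ℝ) else 0))
      = fhat f (i.insertNth 0 β) * 2^m := by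
    have e3 : ∀ δ : Fin m → ZMod 2, fhat f (i.insertNth 0 δ) * (sgn ((0:ZMod 2) * b) *
        (if (0:ZMod 2) • α' + δ = β then (2^m : ℝ) else 0))
        = if δ = β then fhat f (i.insertNth 0 δ) * 2^m else 0 := by
      intro δ
      rw [zero_mul, zero_smul, zero_add]
      simp [sgn, mul_ite]
    rw [Finset.sum_congr rfl (fun δ _ => e3 δ)]
    rw [Finset.sum_ite_eq' Finset.univ β (fun δ => fhat f (i.insertNth 0 δ) * 2^m)]
    simp
  have h1 : ∑ δ : Fin m → ZMod 2, fhat f (i.insertNth 1 δ) * (sgn ((1:ZMod 2) * b) *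
        (if (1:ZMod 2) • α' + δ = β then (2^m : ℝ) else 0))
      = sgn b * (fhat f (i.insertNth 0 β + α) * 2^m) := by
    have hins : i.insertNth 0 β + α = i.insertNth 1 (α' + β) := by
      have hα2 : i.insertNth (α i) (i.removeNth α) = α := Fin.insertNth_self_removeNth i α
      rw [← hα2, hαi, ← insertNth_add, zero_add]
      exact congrArg (fun w => i.insertNth 1 w) (add_comm β α')
    have e3 : ∀ δ : Fin m → ZMod 2, fhat f (i.insertNth 1 δ) * (sgn ((1:ZMod 2) * b) *
        (if (1:ZMod 2) • α' + δ = β then (2^m : ℝ) else 0))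
        = if δ = α' + β then sgn b * (fhat f (i.insertNth 1 δ) * 2^m) else 0 := by
      intro δ
      rw [one_mul, one_smul]
      have hiff : (α' + δ = β) ↔ (δ = α' + β) := by
        constructor
        · intro h
          have h2 : α' + (α' + δ) = δ := by
            funext j
            exact (show ∀ a c : ZMod 2, a + (a + c) = c by decide) _ _
          rw [← h]; exact h2.symm
        · intro h; rw [h]; funext j
          have : ∀ a c : ZMod 2, a + (a + c) = c := by decide
          exact this _ _
      rw [show (if α' + δ = β then (2^m : ℝ) else 0)
          = (if δ = α' + β then (2^m : ℝ) else 0) from by rw [if_congr hiff rfl rfl]]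
      simp only [mul_ite, mul_zero]
      split <;> ring
    rw [Finset.sum_congr rfl (fun δ _ => e3 δ)]
    rw [Finset.sum_ite_eq' Finset.univ (α' + β)
      (fun δ => sgn b * (fhat f (i.insertNth 1 δ) * 2^m))]
    simp [hins]
  rw [h0, h1]
  have h2 : (2:ℝ)^m ≠ 0 := by positivity
  field_simp

lemma sum_split {m : ℕ} (i : Fin (m+1)) (F : (Fin (m+1) → ZMod 2) → ℝ) :
    ∑ γ : Fin (m+1) → ZMod 2, F γ
      = (∑ δ : Fin m → ZMod 2, F (i.insertNth 0 δ))
        + ∑ δ : Fin m → ZMod 2, F (i.insertNth 1 δ) := by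
  rw [← Equiv.sum_comp (Fin.insertNthEquiv (fun _ : Fin (m+1) => ZMod 2) i) F,
    Fintype.sum_prod_type, zmod2_sum (fun c => ∑ δ : Fin m → ZMod 2,
      F ((Fin.insertNthEquiv (fun _ : Fin (m+1) => ZMod 2) i) (c, δ)))]
  rfl

lemma pair_ineq (a b : ℝ) : |a+b| + |a-b| + 2*(min |a| |b|) ≤ 2*(|a|+|b|) := by
  rcases abs_cases a with ⟨h3,h3'⟩|⟨h3,h3'⟩ <;>
  rcases abs_cases b with ⟨h4,h4'⟩|⟨h4,h4'⟩ <;>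
  rw [h3, h4] <;>
  rcases abs_cases (a+b) with ⟨h1,_⟩|⟨h1,_⟩ <;>
  rcases abs_cases (a-b) with ⟨h2,_⟩|⟨h2,_⟩ <;>
  rw [h1, h2] <;>
  rcases le_total a b with h6|h6 <;>
  simp [min_def] <;> split <;> linarith

lemma ip_smul_right {k : ℕ} (β : Fin k → ZMod 2) (c : ZMod 2) (x : Fin k → ZMod 2) :
    ip β (c • x) = c * ip β x := by
  simp [ip, Finset.mul_sum]
  apply Finset.sum_congr rfl
  intro j _
  ring

lemma insertNth_smul {m : ℕ} (i : Fin (m+1)) (c : ZMod 2) (d : ZMod 2) (y : Fin m → ZMod 2) :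
    i.insertNth (c * d) (c • y) = c • (i.insertNth d y : Fin (m+1) → ZMod 2) := by
  funext j
  by_cases hj : j = i
  · subst hj; simp
  · obtain ⟨k, rfl⟩ := Fin.exists_succAbove_eq hj
    simp

lemma add_self_add {k : ℕ} (x y : Fin k → ZMod 2) : x + (x + y) = y := by
  funext j
  exact (show ∀ a c : ZMod 2, a + (a + c) = c by decide) _ _

lemma zmod2_ne_zero : ∀ a : ZMod 2, a ≠ 0 → a = 1 := by decide

lemma zmod2_cases : ∀ a : ZMod 2, a = 0 ∨ a = 1 := by decide

lemma ip_single {k : ℕ} (β : Fin k → ZMod 2) (j : Fin k) :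
    ip β (Pi.single j 1) = β j := by
  rw [ip, Finset.sum_eq_single j]
  · simp
  · intro l _ hl; simp [Pi.single_eq_of_ne hl]
  · simp

lemma chi_zero_right {k : ℕ} (β : Fin k → ZMod 2) : chi β 0 = 1 := by
  rw [chi_eq_sgn]
  have : ip β 0 = 0 := by simp [ip]
  rw [this]; simp [sgn]

set_option maxHeartbeats 2000000 in
theorem aux : ∀ (n : ℕ) (f : (Fin n → ZMod 2) → ℝ), (∀ x, f x = 1 ∨ f x = -1) →
    ∃ (W : Submodule (ZMod 2) (Fin n → ZMod 2)) (v : Fin n → ZMod 2),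
      (n : ℝ) - (∑ γ : Fin n → ZMod 2, |fhat f γ|) ^ 2 ≤ (Module.finrank (ZMod 2) W : ℝ) ∧
      ∀ x ∈ W, f (v + x) = f v := by
  intro n
  induction n with
  | zero =>
    intro f _
    refine ⟨⊤, 0, ?_, ?_⟩
    · have h0 : (0:ℝ) ≤ ((Module.finrank (ZMod 2) (⊤ : Submodule (ZMod 2) (Fin 0 → ZMod 2)) : ℕ) : ℝ) :=
        Nat.cast_nonneg _
      have h1 : (0:ℝ) ≤ (∑ γ : Fin 0 → ZMod 2, |fhat f γ|) ^ 2 := sq_nonneg _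
      simp only [Nat.cast_zero]
      linarith
    · intro x _
      have hx : x = 0 := by funext j; exact Fin.elim0 j
      rw [hx, add_zero]
  | succ m ih =>
    intro f hf
    haveI : Fact (Nat.Prime 2) := ⟨Nat.prime_two⟩
    set A := ∑ γ : Fin (m+1) → ZMod 2, |fhat f γ| with hAdef
    have hA0 : 0 ≤ A := Finset.sum_nonneg (fun γ _ => abs_nonneg _)
    by_cases hconst : ∀ x, f x = f 0
    · refine ⟨⊤, 0, ?_, ?_⟩
      · have h1 : (0:ℝ) ≤ A ^ 2 := sq_nonneg _
        have h2 : Module.finrank (ZMod 2) (⊤ : Submodule (ZMod 2) (Fin (m+1) → ZMod 2))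
            = Module.finrank (ZMod 2) (Fin (m+1) → ZMod 2) := finrank_top _ _
        have h3 : Module.finrank (ZMod 2) (Fin (m+1) → ZMod 2) = m+1 := by
          rw [Module.finrank_pi]; exact Fintype.card_fin _
        rw [h2, h3]
        linarith
      · intro x _
        rw [zero_add, hconst x]
    · -- f is not constant
      obtain ⟨β1, _, hβ1max⟩ := Finset.exists_max_image Finset.univ
        (fun γ : Fin (m+1) → ZMod 2 => |fhat f γ|) ⟨0, Finset.mem_univ 0⟩
      set M := |fhat f β1| with hMdef
      have hMA : M ≤ A := Finset.single_le_sum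
        (f := fun γ : Fin (m+1) → ZMod 2 => |fhat f γ|)
        (fun γ _ => abs_nonneg _) (Finset.mem_univ β1)
      have hP := parseval f hf
      have hAM1 : 1 ≤ A * M := by
        have step : ∀ γ : Fin (m+1) → ZMod 2, (fhat f γ)^2 ≤ |fhat f γ| * M := by
          intro γ
          have h1 : |fhat f γ| ≤ M := hβ1max γ (Finset.mem_univ γ)
          nlinarith [abs_nonneg (fhat f γ), sq_abs (fhat f γ)]
        calc (1:ℝ) = ∑ γ : Fin (m+1) → ZMod 2, (fhat f γ)^2 := hP.symm
          _ ≤ ∑ γ : Fin (m+1) → ZMod 2, |fhat f γ| * M :=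
              Finset.sum_le_sum (fun γ _ => step γ)
          _ = A * M := by rw [← Finset.sum_mul]
      have hM0 : 0 < M := by nlinarith [abs_nonneg (fhat f β1)]
      have hA1 : 1 ≤ A := by nlinarith
      by_cases hsupp : ∀ γ : Fin (m+1) → ZMod 2, γ ≠ β1 → fhat f γ = 0
      · -- singleton support : f = fhat β1 * chi β1
        have hfx : ∀ x, f x = fhat f β1 * chi β1 x := by
          intro x
          rw [← fourier_inversion f x, Finset.sum_eq_single β1]
          · intro γ _ hγ; rw [hsupp γ hγ]; ring
          · intro h; exact absurd (Finset.mem_univ β1) h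
        have hβ1ne : β1 ≠ (0 : Fin (m+1) → ZMod 2) := by
          intro h
          apply hconst
          intro x
          rw [hfx x, hfx 0, h]
          have hz : ∀ z : Fin (m+1) → ZMod 2, chi (0 : Fin (m+1) → ZMod 2) z = 1 := by
            intro z
            rw [chi_eq_sgn]
            have : ip (0 : Fin (m+1) → ZMod 2) z = 0 := by simp [ip]
            rw [this]; simp [sgn]
          rw [hz x, hz 0]
        have hM1 : M = 1 := by
          have hsq : (fhat f β1)^2 = 1 := by
            rw [← hP, Finset.sum_eq_single β1]
            · intro γ _ hγ; rw [hsupp γ hγ]; ring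
            · intro h; exact absurd (Finset.mem_univ β1) h
          nlinarith [sq_abs (fhat f β1)]
        have hAeq : A = 1 := by
          rw [hAdef, Finset.sum_eq_single β1]
          · exact hM1
          · intro γ _ hγ; rw [hsupp γ hγ, abs_zero]
          · intro h; exact absurd (Finset.mem_univ β1) h
        obtain ⟨j, hj⟩ : ∃ j, β1 j ≠ 0 := by
          by_contra hc; push_neg at hc; exact hβ1ne (funext hc)
        have hj1 : β1 j = 1 := zmod2_ne_zero _ hj
        let φ : (Fin (m+1) → ZMod 2) →ₗ[ZMod 2] ZMod 2 :=
          { toFun := fun x => ip β1 x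
            map_add' := fun x y => ip_add_right β1 x y
            map_smul' := fun c x => by simpa using ip_smul_right β1 c x }
        have hsurj : Function.Surjective φ := by
          intro c
          rcases zmod2_cases c with hc | hc
          · exact ⟨0, by rw [hc]; exact map_zero φ⟩
          · refine ⟨Pi.single j 1, ?_⟩
            show ip β1 (Pi.single j 1) = c
            rw [ip_single, hj1, hc]
        have hrank := LinearMap.finrank_range_add_finrank_ker φ
        have hrange : LinearMap.range φ = ⊤ := LinearMap.range_eq_top.mpr hsurj
        have hr1 : Module.finrank (ZMod 2) (LinearMap.range φ) = 1 := by
          rw [hrange, finrank_top, Module.finrank_self]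
        have hpi : Module.finrank (ZMod 2) (Fin (m+1) → ZMod 2) = m+1 := by
          rw [Module.finrank_pi]; exact Fintype.card_fin _
        have hker : Module.finrank (ZMod 2) (LinearMap.ker φ) = m := by omega
        refine ⟨LinearMap.ker φ, 0, ?_, ?_⟩
        · rw [hker, hAeq]
          push_cast
          linarith
        · intro x hx
          have hipx : ip β1 x = 0 := hx
          rw [zero_add, hfx x, hfx 0, chi_eq_sgn, hipx, chi_zero_right]
          simp [sgn]
      · -- at least two nonzero coefficients
        push_neg at hsupp
        obtain ⟨β2', hβ2'ne, hβ2'0⟩ := hsupp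
        obtain ⟨β2, hβ2mem, hβ2max⟩ := Finset.exists_max_image (Finset.univ.erase β1)
          (fun γ : Fin (m+1) → ZMod 2 => |fhat f γ|)
          ⟨β2', Finset.mem_erase.mpr ⟨hβ2'ne, Finset.mem_univ _⟩⟩
        have hβ2ne : β2 ≠ β1 := Finset.ne_of_mem_erase hβ2mem
        set m2 := |fhat f β2| with hm2def
        have hm2max : ∀ γ : Fin (m+1) → ZMod 2, γ ≠ β1 → |fhat f γ| ≤ m2 := by
          intro γ hγ
          exact hβ2max γ (Finset.mem_erase.mpr ⟨hγ, Finset.mem_univ _⟩)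
        have hm2pos : 0 < m2 :=
          lt_of_lt_of_le (abs_pos.mpr hβ2'0) (hm2max β2' hβ2'ne)
        set α := β1 + β2 with hαdef
        have hαne : α ≠ 0 := by
          intro h
          exact hβ2ne ((add_eq_zero_iff_eq β1 β2).mp h).symm
        obtain ⟨i, hi⟩ : ∃ i, α i ≠ 0 := by
          by_contra hc; push_neg at hc; exact hαne (funext hc)
        have hαi : α i = 1 := zmod2_ne_zero _ hi
        have hβ1α : β1 + α = β2 := by rw [hαdef]; exact add_self_add β1 β2
        have hβ2α : β2 + α = β1 := by
          rw [hαdef, add_comm β1 β2]; exact add_self_add β2 β1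
        -- convolution bound : 2M ≤ D
        have hconv := convolution f hf hαne
        set D := ∑ γ : Fin (m+1) → ZMod 2, min |fhat f γ| |fhat f (γ + α)| with hDdef
        have hDM : 2 * M ≤ D := by
          have hne12 : β1 ≠ β2 := hβ2ne.symm
          have hsplit := Finset.sum_sdiff (Finset.subset_univ ({β1, β2} : Finset (Fin (m+1) → ZMod 2)))
            (f := fun γ => fhat f γ * fhat f (γ + α))
          have hpair : ∑ γ ∈ ({β1, β2} : Finset (Fin (m+1) → ZMod 2)),
              fhat f γ * fhat f (γ + α) = 2 * (fhat f β1 * fhat f β2) := by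
            rw [Finset.sum_pair hne12, hβ1α, hβ2α]; ring
          have hrest : ∑ γ ∈ Finset.univ \ ({β1, β2} : Finset (Fin (m+1) → ZMod 2)),
              fhat f γ * fhat f (γ + α) = -(2 * (fhat f β1 * fhat f β2)) := by
            rw [hpair] at hsplit
            rw [hconv] at hsplit
            linarith
          have habs : 2 * (M * m2) ≤ ∑ γ ∈ Finset.univ \ ({β1, β2} : Finset (Fin (m+1) → ZMod 2)),
              |fhat f γ * fhat f (γ + α)| := by
            have h1 : |∑ γ ∈ Finset.univ \ ({β1, β2} : Finset (Fin (m+1) → ZMod 2)),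
                fhat f γ * fhat f (γ + α)| = 2 * (M * m2) := by
              rw [hrest, abs_neg, abs_mul, abs_mul, hMdef, hm2def]
              simp [abs_of_nonneg]
            rw [← h1]
            exact Finset.abs_sum_le_sum_abs _ _
          have hterm : ∀ γ ∈ Finset.univ \ ({β1, β2} : Finset (Fin (m+1) → ZMod 2)),
              |fhat f γ * fhat f (γ + α)| ≤ m2 * min |fhat f γ| |fhat f (γ + α)| := by
            intro γ hγ
            have hγ' : γ ≠ β1 ∧ γ ≠ β2 := by
              simp only [Finset.mem_sdiff, Finset.mem_univ, true_and, Finset.mem_insert,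
                Finset.mem_singleton, not_or] at hγ
              exact hγ
            have hg1 : |fhat f γ| ≤ m2 := hm2max γ hγ'.1
            have hg2 : |fhat f (γ + α)| ≤ m2 := by
              apply hm2max
              intro hc
              apply hγ'.2
              have : γ + α + α = β1 + α := by rw [hc]
              rw [add_add_self, hβ1α] at this
              exact this
            rw [abs_mul]
            rcases min_cases |fhat f γ| |fhat f (γ + α)| with ⟨hmin, _⟩ | ⟨hmin, _⟩ <;>
              rw [hmin] <;> nlinarith [abs_nonneg (fhat f γ), abs_nonneg (fhat f (γ + α))]
          have hsum2 : ∑ γ ∈ Finset.univ \ ({β1, β2} : Finset (Fin (m+1) → ZMod 2)),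
              |fhat f γ * fhat f (γ + α)|
              ≤ ∑ γ ∈ Finset.univ \ ({β1, β2} : Finset (Fin (m+1) → ZMod 2)),
                m2 * min |fhat f γ| |fhat f (γ + α)| := Finset.sum_le_sum hterm
          have hsum3 : ∑ γ ∈ Finset.univ \ ({β1, β2} : Finset (Fin (m+1) → ZMod 2)),
              m2 * min |fhat f γ| |fhat f (γ + α)| ≤ m2 * D := by
            rw [hDdef, Finset.mul_sum]
            apply Finset.sum_le_sum_of_subset_of_nonneg (Finset.sdiff_subset)
            intro γ _ _
            have : 0 ≤ min |fhat f γ| |fhat f (γ + α)| :=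
              le_min (abs_nonneg _) (abs_nonneg _)
            nlinarith
          have : 2 * (M * m2) ≤ m2 * D := le_trans habs (le_trans hsum2 hsum3)
          nlinarith
        -- sums over the two halves
        have hQreidx : ∀ (F : (Fin (m+1) → ZMod 2) → ℝ),
            ∑ β : Fin m → ZMod 2, F (i.insertNth 0 β + α)
            = ∑ δ : Fin m → ZMod 2, F (i.insertNth 1 δ) := by
          intro F
          rw [Finset.sum_congr rfl (fun β (_ : β ∈ Finset.univ) => by
            rw [insertNth_zero_add i α hαi β])]
          exact Fintype.sum_equiv (Equiv.addLeft (i.removeNth α)) _ _ (fun β => rfl)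
        have hPQ : (∑ β : Fin m → ZMod 2, |fhat f (i.insertNth 0 β)|)
            + (∑ β : Fin m → ZMod 2, |fhat f (i.insertNth 0 β + α)|) = A := by
          rw [hQreidx (fun γ => |fhat f γ|), hAdef, sum_split i (fun γ => |fhat f γ|)]
        have hminsum : D = 2 * ∑ β : Fin m → ZMod 2,
            min |fhat f (i.insertNth 0 β)| |fhat f (i.insertNth 0 β + α)| := by
          rw [hDdef, sum_split i (fun γ => min |fhat f γ| |fhat f (γ + α)|)]
          have h2 : ∑ δ : Fin m → ZMod 2,
              min |fhat f (i.insertNth 1 δ)| |fhat f (i.insertNth 1 δ + α)|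
              = ∑ β : Fin m → ZMod 2,
                min |fhat f (i.insertNth 0 β)| |fhat f (i.insertNth 0 β + α)| := by
            rw [← hQreidx (fun γ => min |fhat f γ| |fhat f (γ + α)|)]
            apply Finset.sum_congr rfl
            intro β _
            rw [add_add_self (i.insertNth 0 β) α]
            exact min_comm _ _
          rw [h2]; ring
        -- total of the two restricted norms
        have hN : (∑ β : Fin m → ZMod 2,
              |fhat f (i.insertNth 0 β) + fhat f (i.insertNth 0 β + α)|)
            + (∑ β : Fin m → ZMod 2,
              |fhat f (i.insertNth 0 β) - fhat f (i.insertNth 0 β + α)|)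
            ≤ 2*A - 2*M := by
          have e1 : ∑ β : Fin m → ZMod 2,
              (2*(|fhat f (i.insertNth 0 β)| + |fhat f (i.insertNth 0 β + α)|)
                - 2 * min |fhat f (i.insertNth 0 β)| |fhat f (i.insertNth 0 β + α)|)
              = 2*A - D := by
            rw [Finset.sum_sub_distrib, ← Finset.mul_sum, ← Finset.mul_sum,
              Finset.sum_add_distrib, hPQ, ← hminsum]
          have e2 : (∑ β : Fin m → ZMod 2,
              |fhat f (i.insertNth 0 β) + fhat f (i.insertNth 0 β + α)|)
            + (∑ β : Fin m → ZMod 2,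
              |fhat f (i.insertNth 0 β) - fhat f (i.insertNth 0 β + α)|)
            ≤ 2*A - D := by
            rw [← e1, ← Finset.sum_add_distrib]
            apply Finset.sum_le_sum
            intro β _
            have := pair_ineq (fhat f (i.insertNth 0 β)) (fhat f (i.insertNth 0 β + α))
            linarith
          linarith
        -- choose the good restriction
        obtain ⟨b, hb⟩ : ∃ b : ZMod 2, ∑ β : Fin m → ZMod 2,
            |fhat (fun y => f (i.insertNth (b + ip (i.removeNth α) y) y)) β| ≤ A - M := by
          have h0 : ∀ β : Fin m → ZMod 2,
              fhat (fun y => f (i.insertNth ((0:ZMod 2) + ip (i.removeNth α) y) y)) β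
              = fhat f (i.insertNth 0 β) + fhat f (i.insertNth 0 β + α) := by
            intro β
            rw [fhat_restrict f i α hαi 0 β]
            simp [sgn]
          have h1 : ∀ β : Fin m → ZMod 2,
              fhat (fun y => f (i.insertNth ((1:ZMod 2) + ip (i.removeNth α) y) y)) β
              = fhat f (i.insertNth 0 β) - fhat f (i.insertNth 0 β + α) := by
            intro β
            rw [fhat_restrict f i α hαi 1 β]
            have : sgn 1 = -1 := by simp [sgn]
            rw [this]; ring
          rcases le_total
            (∑ β : Fin m → ZMod 2,
              |fhat (fun y => f (i.insertNth ((0:ZMod 2) + ip (i.removeNth α) y) y)) β|)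
            (∑ β : Fin m → ZMod 2,
              |fhat (fun y => f (i.insertNth ((1:ZMod 2) + ip (i.removeNth α) y) y)) β|)
            with h | h
          · refine ⟨0, ?_⟩
            have q0 : ∑ β : Fin m → ZMod 2,
                |fhat (fun y => f (i.insertNth ((0:ZMod 2) + ip (i.removeNth α) y) y)) β|
                = ∑ β : Fin m → ZMod 2,
                  |fhat f (i.insertNth 0 β) + fhat f (i.insertNth 0 β + α)| :=
              Finset.sum_congr rfl (fun β _ => by rw [h0 β])
            have q1 : ∑ β : Fin m → ZMod 2,
                |fhat (fun y => f (i.insertNth ((1:ZMod 2) + ip (i.removeNth α) y) y)) β|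
                = ∑ β : Fin m → ZMod 2,
                  |fhat f (i.insertNth 0 β) - fhat f (i.insertNth 0 β + α)| :=
              Finset.sum_congr rfl (fun β _ => by rw [h1 β])
            rw [q0] at h ⊢
            rw [q1] at h
            linarith
          · refine ⟨1, ?_⟩
            have q0 : ∑ β : Fin m → ZMod 2,
                |fhat (fun y => f (i.insertNth ((0:ZMod 2) + ip (i.removeNth α) y) y)) β|
                = ∑ β : Fin m → ZMod 2,
                  |fhat f (i.insertNth 0 β) + fhat f (i.insertNth 0 β + α)| :=
              Finset.sum_congr rfl (fun β _ => by rw [h0 β])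
            have q1 : ∑ β : Fin m → ZMod 2,
                |fhat (fun y => f (i.insertNth ((1:ZMod 2) + ip (i.removeNth α) y) y)) β|
                = ∑ β : Fin m → ZMod 2,
                  |fhat f (i.insertNth 0 β) - fhat f (i.insertNth 0 β + α)| :=
              Finset.sum_congr rfl (fun β _ => by rw [h1 β])
            rw [q1] at h ⊢
            rw [q0] at h
            linarith
        -- apply the induction hypothesis to the restriction
        set g : (Fin m → ZMod 2) → ℝ :=
          fun y => f (i.insertNth (b + ip (i.removeNth α) y) y) with hgdef
        have hgbool : ∀ y, g y = 1 ∨ g y = -1 := fun y => hf _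
        obtain ⟨W', v', hrk', hcst'⟩ := ih g hgbool
        have hAg0 : 0 ≤ ∑ β : Fin m → ZMod 2, |fhat g β| :=
          Finset.sum_nonneg (fun β _ => abs_nonneg _)
        have hAg2 : (∑ β : Fin m → ZMod 2, |fhat g β|)^2 ≤ A^2 - 1 := by
          nlinarith [hb, hAM1, hMA, hM0, hAg0]
        -- the affine embedding
        let L : (Fin m → ZMod 2) →ₗ[ZMod 2] (Fin (m+1) → ZMod 2) :=
          { toFun := fun y => i.insertNth (ip (i.removeNth α) y) y
            map_add' := fun y z => by
              show i.insertNth (ip (i.removeNth α) (y + z)) (y + z)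
                = (i.insertNth (ip (i.removeNth α) y) y : Fin (m+1) → ZMod 2)
                  + i.insertNth (ip (i.removeNth α) z) z
              rw [ip_add_right]
              exact insertNth_add i _ _ y z
            map_smul' := fun c y => by
              show i.insertNth (ip (i.removeNth α) (c • y)) (c • y)
                = c • (i.insertNth (ip (i.removeNth α) y) y : Fin (m+1) → ZMod 2)
              rw [ip_smul_right]
              exact insertNth_smul i c _ y }
        have hLapp : ∀ y : Fin m → ZMod 2, L y = i.insertNth (ip (i.removeNth α) y) y :=
          fun y => rfl
        have hLinj : Function.Injective L := by
          intro y z h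
          funext k
          have h2 := congrFun h (i.succAbove k)
          rw [hLapp, hLapp] at h2
          simpa using h2
        have hkey : ∀ z : Fin m → ZMod 2,
            (i.insertNth b 0 : Fin (m+1) → ZMod 2) + L z
            = i.insertNth (b + ip (i.removeNth α) z) z := by
          intro z
          have h3 := insertNth_add i b (ip (i.removeNth α) z) 0 z
          rw [zero_add] at h3
          rw [hLapp]
          exact h3.symm
        refine ⟨W'.map L, (i.insertNth b 0 : Fin (m+1) → ZMod 2) + L v', ?_, ?_⟩
        · have heq : Module.finrank (ZMod 2) (W'.map L) = Module.finrank (ZMod 2) W' :=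
            (LinearEquiv.finrank_eq (Submodule.equivMapOfInjective L hLinj W')).symm
          rw [heq]
          push_cast
          linarith [hrk', hAg2]
        · intro x hx
          obtain ⟨w, hw, rfl⟩ := Submodule.mem_map.mp hx
          have h1 : f ((i.insertNth b 0 : Fin (m+1) → ZMod 2) + L v' + L w) = g (v' + w) := by
            rw [add_assoc, ← map_add L, hkey (v' + w)]
          have h2 : g v' = f ((i.insertNth b 0 : Fin (m+1) → ZMod 2) + L v') := by
            rw [hkey v']
          calc f ((i.insertNth b 0 : Fin (m+1) → ZMod 2) + L v' + L w)
              = g (v' + w) := h1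
            _ = g v' := hcst' w hw
            _ = f ((i.insertNth b 0 : Fin (m+1) → ZMod 2) + L v') := h2

/-- **Theorem 1.1**: a Boolean function with spectral norm `A` is constant on a
nonempty affine subspace of codimension at most `A²`. -/
theorem constant_on_affine_subspace (n : ℕ) (hn : 1 ≤ n)
    (f : (Fin n → ZMod 2) → ℝ) (hf : ∀ x, f x = 1 ∨ f x = -1)
    (A : ℝ) (hA : ∑ α : Fin n → ZMod 2, |fhat f α| = A) :
    ∃ (W : Submodule (ZMod 2) (Fin n → ZMod 2)) (v : Fin n → ZMod 2),
      (n : ℝ) - A ^ 2 ≤ (Module.finrank (ZMod 2) W : ℝ) ∧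
      ∀ x ∈ W, f (v + x) = f v := by
  subst hA
  exact aux n f hf
end

section
/- Let z₁, z₂ ∈ ℂ be nonzero with |z₂| ≤ |z₁|. Then |z₁| + |z₂| − |z₁ + z₂| ≥ ((1 − Re(z₁·conj(z₂))/(|z₁|·|z₂|))/2) · |z₂|. Equivalently, if θ ∈ [0,π] is the angle between z₁ and z₂ (so that Re(z₁·conj(z₂)) = |z₁||z₂|·cos θ), then |z₁| + |z₂| − |z₁ + z₂| ≥ ((1 − cos θ)/2)·|z₂|. -/
/-- **Lemma 4.3** (geometric lemma): for nonzero complex numbers `z₁, z₂` with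
`|z₂| ≤ |z₁|`, we have `|z₁| + |z₂| − |z₁ + z₂| ≥ ((1 − cos θ)/2)·|z₂|`, where
`θ` is the angle between `z₁` and `z₂`, i.e.
`cos θ = Re(z₁·conj(z₂))/(|z₁|·|z₂|)`. -/
theorem triangle_inequality_saving (z₁ z₂ : ℂ) (h₁ : z₁ ≠ 0) (h₂ : z₂ ≠ 0)
    (h : ‖z₂‖ ≤ ‖z₁‖) :
    ((1 - (z₁ * (starRingEnd ℂ) z₂).re / (‖z₁‖ * ‖z₂‖)) / 2) *
        ‖z₂‖ ≤
      ‖z₁‖ + ‖z₂‖ - ‖z₁ + z₂‖ := by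
  set a := ‖z₁‖ with ha_def
  set b := ‖z₂‖ with hb_def
  set t := (z₁ * (starRingEnd ℂ) z₂).re with ht_def
  have ha : 0 < a := by simpa [ha_def] using norm_pos_iff.mpr h₁
  have hb : 0 < b := by simpa [hb_def] using norm_pos_iff.mpr h₂
  have hab : (0:ℝ) < a * b := mul_pos ha hb
  have ht : |t| ≤ a * b := by
    calc |t| ≤ ‖z₁ * (starRingEnd ℂ) z₂‖ := Complex.abs_re_le_norm _
    _ = a * b := by rw [norm_mul, Complex.norm_conj]
  set c := t / (a * b) with hc_def
  have hc1 : c ≤ 1 := by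
    rw [hc_def, div_le_one hab]
    exact (le_abs_self t).trans ht
  have hc2 : -1 ≤ c := by
    rw [hc_def, le_div_iff₀ hab]
    nlinarith [neg_abs_le t]
  have htc : t = c * (a * b) := by rw [hc_def, div_mul_cancel₀ t hab.ne']
  have hA2 : ‖z₁ + z₂‖ ^ 2 = a ^ 2 + b ^ 2 + 2 * t := by
    rw [ha_def, hb_def, ht_def, ← Complex.normSq_eq_norm_sq, ← Complex.normSq_eq_norm_sq,
      ← Complex.normSq_eq_norm_sq, Complex.normSq_add]
  set A := ‖z₁ + z₂‖ with hA_def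
  have hA0 : 0 ≤ A := norm_nonneg _
  have hX0 : 0 ≤ a + (1 + c) / 2 * b := by nlinarith
  have hsq : A ^ 2 ≤ (a + (1 + c) / 2 * b) ^ 2 := by
    rw [hA2, htc]
    nlinarith [mul_nonneg (mul_nonneg (sub_nonneg.2 hc1) hb.le)
      (by nlinarith : (0:ℝ) ≤ 4 * a - 3 * b - b * c)]
  have hAX : A ≤ a + (1 + c) / 2 * b := by nlinarith [sq_nonneg (A + (a + (1 + c) / 2 * b))]
  have : (1 - c) / 2 * b = a + b - (a + (1 + c) / 2 * b) := by ring
  linarith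
end
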